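/- The bipartite degree sequence h_k(n) = h_0(n) − k·𝟙_{a_1} − k·𝟙_{b_n} is indecomposable for all 0 < k < n, where h_0(n) has degrees deg(a_i)=n+1−i and deg(b_i)=i. That is, there exist no p, q with 0 < p+q < 2n, 0 ≤ p,q ≤ n satisfying the decomposition equation: (sum of the p largest degrees on side A) = p(n−q) + (sum of the q smallest-indexed degrees on side B as in the Tyshkevich criterion). -/

import Mathlib

/-- The sorted (non-increasing) degree sequence of either side of `h_k(n)`:
`d i = n - i` for `1 ≤ i ≤ k` and `d i = n + 1 - i` for `k < i ≤ n`. -/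
def hkSortedDeg (n k i : ℕ) : ℕ := if i ≤ k then n - i else n + 1 - i

/-- Closed form (×2) for partial sums of the sorted degree sequence. -/
lemma hkSortedDeg_sum (n k : ℕ) : ∀ p, p ≤ n →
    2 * (∑ i ∈ Finset.Icc 1 p, hkSortedDeg n k i) + p * (p + 1) + 2 * min p k
      = 2 * p * (n + 1) := by
  intro p
  induction p with
  | zero => simp
  | succ p ih =>
    intro hpn
    have h := ih (by omega)
    rw [Finset.sum_Icc_succ_top (by omega)]
    set S := ∑ i ∈ Finset.Icc 1 p, hkSortedDeg n k i with hS
    have e1 : 2 * (p + 1) * (n + 1) = 2 * p * (n + 1) + 2 * (n + 1) := by ring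
    have e2 : (p + 1) * (p + 1 + 1) = p * (p + 1) + 2 * (p + 1) := by ring
    simp only [hkSortedDeg]
    split <;> omega

/-- The bipartite degree sequence `h_k(n) = h_0(n) - k·𝟙_{a_1} - k·𝟙_{b_n}` is
indecomposable for `0 < k < n`: there are no `p, q` satisfying the Tyshkevich
decomposition criterion
`Σ_{i=1}^p d^A_i = p(n - q) + Σ_{i=n-q+1}^n d^B_i`
(both sides sorted non-increasingly). -/
theorem stmt_3 (n k : ℕ) (hk : 0 < k) (hkn : k < n) :
    ¬ ∃ p q : ℕ, 0 < p + q ∧ p + q < 2 * n ∧ p ≤ n ∧ q ≤ n ∧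
      (∑ i ∈ Finset.Icc 1 p, hkSortedDeg n k i) =
        p * (n - q) + ∑ i ∈ Finset.Icc (n - q + 1) n, hkSortedDeg n k i := by
  rintro ⟨p, q, hpq0, hpq2, hpn, hqn, heq⟩
  obtain ⟨r, rfl⟩ : ∃ r, n = r + q := ⟨n - q, by omega⟩
  simp only [Nat.add_sub_cancel] at heq
  have hkle : k ≤ r + q := hkn.le
  have h1 := hkSortedDeg_sum (r + q) k p hpn
  have h2 := hkSortedDeg_sum (r + q) k r (by omega)
  have h3 := hkSortedDeg_sum (r + q) k (r + q) le_rfl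
  have hsplit : (∑ i ∈ Finset.Icc 1 r, hkSortedDeg (r + q) k i)
      + ∑ i ∈ Finset.Icc (r + 1) (r + q), hkSortedDeg (r + q) k i
      = ∑ i ∈ Finset.Icc 1 (r + q), hkSortedDeg (r + q) k i := by
    rw [Finset.Icc_add_one_left_eq_Ioc,
      show ∀ b, Finset.Icc (1 : ℕ) b = Finset.Ioc 0 b from Finset.Icc_add_one_left_eq_Ioc 0,
      show ∀ b, Finset.Icc (1 : ℕ) b = Finset.Ioc 0 b from Finset.Icc_add_one_left_eq_Ioc 0]
    exact Finset.sum_Ioc_consecutive _ (Nat.zero_le _) (by omega)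
  rw [min_eq_right hkle] at h3
  rcases le_total p k with hpk | hpk <;> rcases le_total r k with hrk | hrk
  · rw [min_eq_left hpk] at h1
    rw [min_eq_left hrk] at h2
    zify at h1 h2 h3 hsplit heq hpq0 hpq2 hkn hk
    nlinarith [sq_nonneg ((q : ℤ) - p), sq_nonneg (2*((q : ℤ) - p) - 1)]
  · rw [min_eq_left hpk] at h1
    rw [min_eq_right hrk] at h2
    zify at h1 h2 h3 hsplit heq hpq0 hpq2 hkn hk
    nlinarith [sq_nonneg ((q : ℤ) - p)]
  · rw [min_eq_right hpk] at h1
    rw [min_eq_left hrk] at h2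
    zify at h1 h2 h3 hsplit heq hpq0 hpq2 hkn hk
    nlinarith [sq_nonneg ((q : ℤ) - p)]
  · rw [min_eq_right hpk] at h1
    rw [min_eq_right hrk] at h2
    zify at h1 h2 h3 hsplit heq hpq0 hpq2 hkn hk
    nlinarith [sq_nonneg (2*((q : ℤ) - p) + 1)]
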